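/- Let f : [m,M] → ℝ be twice differentiable with f'' ≤ β on [m,M]. Then for every t ∈ [m,M], f(t) ≥ L(t) - (β/2)·((M+m)t - mM - t²), where L(t) is the secant line through (m, f(m)) and (M, f(M)). -/

import Mathlib

/-- Let `f` be twice differentiable on an open interval containing `[m, M]` with
`f'' ≤ β` on `[m, M]`.  Then for every `t ∈ [m, M]`,
`f t ≥ L t - (β/2) * ((M+m)*t - m*M - t^2)`, where `L` is the secant line through
`(m, f m)` and `(M, f M)`. -/
theorem secant_lower_bound_of_second_deriv_upper_bound
    (m M β : ℝ) (hmM : m < M) (f : ℝ → ℝ) (a b : ℝ)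
    (hab : Set.Icc m M ⊆ Set.Ioo a b)
    (hf : ∀ x ∈ Set.Ioo a b, HasDerivAt f (deriv f x) x)
    (hf' : ∀ x ∈ Set.Ioo a b, HasDerivAt (deriv f) (deriv (deriv f) x) x)
    (hβ : ∀ x ∈ Set.Icc m M, deriv (deriv f) x ≤ β) :
    ∀ t ∈ Set.Icc m M,
      ((M - t) / (M - m)) * f m + ((t - m) / (M - m)) * f M
          - (β / 2) * ((M + m) * t - m * M - t ^ 2) ≤ f t := by
  intro t ht
  set g : ℝ → ℝ := fun x => β / 2 * x ^ 2 - f x with hg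
  have hopen : IsOpen (Set.Ioo a b) := isOpen_Ioo
  have hder : ∀ x ∈ Set.Ioo a b, HasDerivAt g (β * x - deriv f x) x := by
    intro x hx
    have h := (((hasDerivAt_pow 2 x).const_mul (β / 2)).sub (hf x hx))
    convert h using 1
    push_cast
    exacts [rfl, rfl, rfl, by push_cast; ring]
  have hderiv_g : Set.EqOn (deriv g) (fun x => β * x - deriv f x) (Set.Ioo a b) :=
    fun x hx => (hder x hx).deriv
  have hder2 : ∀ x ∈ Set.Ioo a b, HasDerivAt (deriv g) (β - deriv (deriv f) x) x := by
    intro x hx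
    have h1 : HasDerivAt (fun x => β * x - deriv f x) (β - deriv (deriv f) x) x := by
      have h := ((hasDerivAt_id x).const_mul β).sub (hf' x hx)
      convert h using 1
      exacts [rfl, rfl, rfl, by ring]
    exact h1.congr_of_eventuallyEq
      (Filter.eventuallyEq_of_mem (hopen.mem_nhds hx) hderiv_g)
  have hsub : interior (Set.Icc m M) ⊆ Set.Ioo a b :=
    fun x hx => hab (interior_subset hx)
  have hconv : ConvexOn ℝ (Set.Icc m M) g := by
    apply convexOn_of_deriv2_nonneg (convex_Icc m M)
    · exact fun x hx => (hder x (hab hx)).continuousAt.continuousWithinAt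
    · exact fun x hx => ((hder x (hsub hx)).differentiableAt).differentiableWithinAt
    · exact fun x hx => ((hder2 x (hsub hx)).differentiableAt).differentiableWithinAt
    · intro x hx
      have hx' : x ∈ Set.Icc m M := interior_subset hx
      have : deriv^[2] g x = β - deriv (deriv f) x := by
        simp only [Function.iterate_succ, Function.iterate_zero, Function.comp_apply, id]
        exact (hder2 x (hsub hx)).deriv
      rw [this]
      linarith [hβ x hx']
  have hMm : (0:ℝ) < M - m := by linarith
  have ha' : (0:ℝ) ≤ (M - t) / (M - m) := div_nonneg (by linarith [ht.2]) hMm.le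
  have hb' : (0:ℝ) ≤ (t - m) / (M - m) := div_nonneg (by linarith [ht.1]) hMm.le
  have hsum : (M - t) / (M - m) + (t - m) / (M - m) = 1 := by
    field_simp
    ring
  have key := hconv.2 (Set.left_mem_Icc.2 hmM.le) (Set.right_mem_Icc.2 hmM.le) ha' hb' hsum
  have hpt : ((M - t) / (M - m)) • m + ((t - m) / (M - m)) • M = t := by
    simp only [smul_eq_mul]
    rw [div_mul_eq_mul_div, div_mul_eq_mul_div, ← add_div, div_eq_iff hMm.ne']
    ring
  rw [hpt] at key
  simp only [smul_eq_mul, hg] at key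
  have hid : ((M - t) / (M - m)) * m ^ 2 + ((t - m) / (M - m)) * M ^ 2
      = (M + m) * t - m * M := by
    field_simp
    ring
  have h3 := congrArg (fun x => β / 2 * x) hid
  linarith [key, h3]
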